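/- arXiv:1703.03369 — 5 statements merged into one kernel-verified Lean document; each statement's English description precedes it below -/
import Mathlib

section
/- The Huber function ψ_γ is Fréchet differentiable on ℝⁿ, with gradient ∇ψ_γ(z) = g γ z / max(g, γ|z|) for all z ∈ ℝⁿ. -/
-- derivative of t ↦ max t 0 ^ 2
lemma hasDerivAt_max_sq (t : ℝ) : HasDerivAt (fun s : ℝ => max s 0 ^ 2) (2 * max t 0) t := by
  rcases lt_trichotomy t 0 with h | h | h
  · have : (fun s : ℝ => max s 0 ^ 2) =ᶠ[nhds t] fun _ => (0:ℝ) := by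
      filter_upwards [eventually_lt_nhds h] with s hs
      simp [max_eq_right hs.le]
    rw [max_eq_right h.le, mul_zero]
    exact (hasDerivAt_const t (0:ℝ)).congr_of_eventuallyEq this
  · subst h
    rw [hasDerivAt_iff_isLittleO]
    simp only [max_self, ne_eq, OfNat.ofNat_ne_zero, not_false_eq_true, zero_pow, mul_zero,
      smul_zero, sub_zero]
    have h1 : (fun s : ℝ => max s 0 ^ 2) =O[nhds 0] fun s => s * s := by
      apply Asymptotics.IsBigO.of_bound 1
      filter_upwards with s
      simp only [one_mul, Real.norm_eq_abs, ← sq]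
      rw [abs_of_nonneg (sq_nonneg _)]
      rcases le_total s 0 with hs | hs
      · simpa [max_eq_right hs] using sq_nonneg s
      · rw [max_eq_left hs]; exact le_abs_self _
    have h2 : (fun s : ℝ => s * s) =o[nhds 0] fun s => s := by
      have := (Asymptotics.isBigO_refl (fun s : ℝ => s) (nhds 0)).mul_isLittleO
        ((Asymptotics.isLittleO_one_iff ℝ).mpr (by simpa using Filter.tendsto_id (x := nhds (0:ℝ))))
      simpa using this
    exact h1.trans_isLittleO h2
  · have : (fun s : ℝ => max s 0 ^ 2) =ᶠ[nhds t] fun s => s ^ 2 := by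
      filter_upwards [eventually_gt_nhds h] with s hs
      simp [max_eq_left hs.le]
    rw [max_eq_left h.le]
    exact ((by simpa using hasDerivAt_pow 2 t) : HasDerivAt (fun s : ℝ => s ^ 2) (2 * t) t).congr_of_eventuallyEq this

set_option synthInstance.maxHeartbeats 1000000 in
set_option maxHeartbeats 2000000 in
theorem huber_gradient (n : ℕ) (g γ : ℝ) (hg : 0 < g) (hγ : 0 < γ)
    (ψ : EuclideanSpace ℝ (Fin n) → ℝ)
    (hψ : ∀ z, ψ z = if ‖z‖ > g / γ then g * ‖z‖ - g ^ 2 / (2 * γ) else γ / 2 * ‖z‖ ^ 2) :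
    ∀ z : EuclideanSpace ℝ (Fin n),
      HasGradientAt ψ ((g * γ / max g (γ * ‖z‖)) • z) z := by
  intro z
  set a : ℝ := g / γ with ha
  have ha0 : 0 < a := div_pos hg hγ
  have hglobal : ∀ y : EuclideanSpace ℝ (Fin n),
      ψ y = γ / 2 * ‖y‖ ^ 2 - γ / 2 * max (‖y‖ - a) 0 ^ 2 := by
    intro y
    rw [hψ y]
    split_ifs with h
    · rw [max_eq_left (by linarith)]
      have h1 : γ * a = g := by rw [ha]; field_simp
      rw [← h1]
      field_simp
      ring
    · rw [max_eq_right (by push_neg at h; linarith)]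
      ring
  rcases eq_or_ne z 0 with hz | hz
  · subst hz
    have hev : ψ =ᶠ[nhds (0 : EuclideanSpace ℝ (Fin n))] fun y => γ / 2 * ‖y‖ ^ 2 := by
      have hb : ∀ᶠ y : EuclideanSpace ℝ (Fin n) in nhds 0, ‖y‖ < a := by
        filter_upwards [Metric.ball_mem_nhds (0 : EuclideanSpace ℝ (Fin n)) ha0] with y hy
        simpa [dist_eq_norm] using hy
      filter_upwards [hb] with y hy
      rw [hglobal y, max_eq_right (by linarith)]
      ring
    have h2 : HasFDerivAt (fun y : EuclideanSpace ℝ (Fin n) => γ / 2 * ‖y‖ ^ 2)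
        ((γ / 2) • (2 • (innerSL ℝ (0 : EuclideanSpace ℝ (Fin n))))) 0 :=
      ((hasStrictFDerivAt_norm_sq (0 : EuclideanSpace ℝ (Fin n))).hasFDerivAt).const_mul (γ / 2)
    have h3 : HasGradientAt (fun y : EuclideanSpace ℝ (Fin n) => γ / 2 * ‖y‖ ^ 2)
        ((g * γ / max g (γ * ‖(0 : EuclideanSpace ℝ (Fin n))‖)) • (0 : EuclideanSpace ℝ (Fin n))) 0 := by
      rw [smul_zero, hasGradientAt_iff_hasFDerivAt, map_zero]
      have h0 : ((γ / 2) • (2 • (innerSL ℝ (0 : EuclideanSpace ℝ (Fin n)))))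
          = (0 : EuclideanSpace ℝ (Fin n) →L[ℝ] ℝ) := by
        ext w; simp
      rw [← h0]; exact h2
    exact h3.congr_of_eventuallyEq hev
  · have hnz : (0:ℝ) < ‖z‖ := norm_pos_iff.mpr hz
    have hs : (0:ℝ) < ‖z‖ ^ 2 := by positivity
    have hsqrt : HasDerivAt (fun s : ℝ => Real.sqrt s - a) (1 / (2 * Real.sqrt (‖z‖ ^ 2))) (‖z‖ ^ 2) :=
      (Real.hasDerivAt_sqrt hs.ne').sub_const a
    have hq : HasDerivAt (fun s : ℝ => max (Real.sqrt s - a) 0 ^ 2)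
        ((2 * max (Real.sqrt (‖z‖ ^ 2) - a) 0) * (1 / (2 * Real.sqrt (‖z‖ ^ 2)))) (‖z‖ ^ 2) :=
      (hasDerivAt_max_sq _).comp _ hsqrt
    have hnormsq : HasFDerivAt (fun y : EuclideanSpace ℝ (Fin n) => ‖y‖ ^ 2)
        (2 • (innerSL ℝ z)) z := (hasStrictFDerivAt_norm_sq z).hasFDerivAt
    have hcomp : HasFDerivAt (fun y : EuclideanSpace ℝ (Fin n) => max (Real.sqrt (‖y‖ ^ 2) - a) 0 ^ 2)
        (((2 * max (Real.sqrt (‖z‖ ^ 2) - a) 0) * (1 / (2 * Real.sqrt (‖z‖ ^ 2)))) • (2 • (innerSL ℝ z))) z :=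
      by have h := hq.comp_hasFDerivAt z hnormsq; exact h
    set d : ℝ := (2 * max (Real.sqrt (‖z‖ ^ 2) - a) 0) * (1 / (2 * Real.sqrt (‖z‖ ^ 2))) with hd
    have hF : HasFDerivAt ψ
        ((γ / 2) • (2 • (innerSL ℝ z)) - (γ / 2) • (d • (2 • (innerSL ℝ z)))) z := by
      have hsub := (hnormsq.const_mul (γ / 2)).sub (hcomp.const_mul (γ / 2))
      refine hsub.congr_of_eventuallyEq ?_
      filter_upwards with y
      rw [hglobal y]; simp only [Pi.sub_apply]; rw [Real.sqrt_sq (norm_nonneg y)]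
    have hsq : Real.sqrt (‖z‖ ^ 2) = ‖z‖ := Real.sqrt_sq (norm_nonneg z)
    have hcoef : γ - γ * d = g * γ / max g (γ * ‖z‖) := by
      rw [hd, hsq]
      rcases le_total (γ * ‖z‖) g with h | h
      · have hza : ‖z‖ ≤ a := by rw [ha, le_div_iff₀ hγ]; linarith [mul_comm ‖z‖ γ]
        rw [max_eq_left h, max_eq_right (by linarith)]
        field_simp
        ring
      · have hza : a ≤ ‖z‖ := by rw [ha, div_le_iff₀ hγ]; linarith [mul_comm ‖z‖ γ]
        rw [max_eq_right h, max_eq_left (by linarith), ha]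
        field_simp
        ring
    have hEq : (InnerProductSpace.toDual ℝ (EuclideanSpace ℝ (Fin n)))
        ((g * γ / max g (γ * ‖z‖)) • z)
        = (γ / 2) • (2 • (innerSL ℝ z)) - (γ / 2) • (d • (2 • (innerSL ℝ z))) := by
      ext w
      simp only [InnerProductSpace.toDual_apply_apply, ContinuousLinearMap.sub_apply,
        ContinuousLinearMap.smul_apply, innerSL_apply_apply, real_inner_smul_left, smul_eq_mul]
      rw [← hcoef]
      ring
    rw [hasGradientAt_iff_hasFDerivAt, hEq]
    exact hF
end

section
/- The map q : ℝⁿ → ℝⁿ defined by q(z) = g γ z / max(g, γ|z|) is Lipschitz continuous on ℝⁿ with Lipschitz constant γ. -/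
theorem huber_gradient_lipschitz (n : ℕ) (g γ : ℝ) (hg : 0 < g) (hγ : 0 < γ)
    (q : EuclideanSpace ℝ (Fin n) → EuclideanSpace ℝ (Fin n))
    (hq : ∀ z, q z = (g * γ / max g (γ * ‖z‖)) • z) :
    ∀ z w : EuclideanSpace ℝ (Fin n), ‖q z - q w‖ ≤ γ * ‖z - w‖ := by
  intro z w
  set s := ‖z‖ with hs
  set t := ‖w‖ with ht
  have hs0 : 0 ≤ s := norm_nonneg z
  have ht0 : 0 ≤ t := norm_nonneg w
  set a : ℝ := g * γ / max g (γ * s) with ha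
  set b : ℝ := g * γ / max g (γ * t) with hb
  have hmaxs : (0:ℝ) < max g (γ * s) := lt_max_of_lt_left hg
  have hmaxt : (0:ℝ) < max g (γ * t) := lt_max_of_lt_left hg
  have ha0 : 0 < a := div_pos (mul_pos hg hγ) hmaxs
  have hb0 : 0 < b := div_pos (mul_pos hg hγ) hmaxt
  have haγ : a ≤ γ := by
    rw [ha, div_le_iff₀ hmaxs]
    calc g * γ = γ * g := mul_comm _ _
    _ ≤ γ * max g (γ * s) := by
        exact mul_le_mul_of_nonneg_left (le_max_left _ _) hγ.le
  have hbγ : b ≤ γ := by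
    rw [hb, div_le_iff₀ hmaxt]
    calc g * γ = γ * g := mul_comm _ _
    _ ≤ γ * max g (γ * t) := by
        exact mul_le_mul_of_nonneg_left (le_max_left _ _) hγ.le
  have has : a * s = min (γ * s) g := by
    rcases le_total (γ * s) g with h | h
    · rw [ha, max_eq_left h, min_eq_left h]
      field_simp
    · have hγs : 0 < γ * s := lt_of_lt_of_le hg h
      rw [ha, max_eq_right h, min_eq_right h]
      field_simp
      exact mul_inv_cancel₀ (by rintro h0; rw [h0, mul_zero] at hγs; exact lt_irrefl _ hγs)
  have hbt : b * t = min (γ * t) g := by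
    rcases le_total (γ * t) g with h | h
    · rw [hb, max_eq_left h, min_eq_left h]
      field_simp
    · have hγt : 0 < γ * t := lt_of_lt_of_le hg h
      rw [hb, max_eq_right h, min_eq_right h]
      field_simp
      exact mul_inv_cancel₀ (by rintro h0; rw [h0, mul_zero] at hγt; exact lt_irrefl _ hγt)
  -- key product inequality
  have hprod : 0 ≤ (a * s - b * t) * ((γ - a) * s - (γ - b) * t) := by
    have h1 : (γ - a) * s = γ * s - a * s := by ring
    have h2 : (γ - b) * t = γ * t - b * t := by ring
    rw [h1, h2, has, hbt]
    rcases le_total (γ * s) g with hsg | hsg <;> rcases le_total (γ * t) g with htg | htg <;>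
      rcases le_total s t with hst | hst <;>
      simp [min_eq_left, min_eq_right, hsg, htg] <;> nlinarith
  -- Cauchy-Schwarz for z,w
  have hcs : inner ℝ z w ≤ s * t := real_inner_le_norm z w
  have hcoef : 0 ≤ a * (γ - b) + b * (γ - a) := by nlinarith
  -- key inequality: ‖qz - qw‖^2 ≤ γ * ⟪qz - qw, z - w⟫
  have hkey : ‖q z - q w‖ ^ 2 ≤ γ * inner ℝ (q z - q w) (z - w) := by
    rw [hq z, hq w, ← ha, ← hb]
    rw [← real_inner_self_eq_norm_sq]
    have e1 : (inner ℝ (a • z - b • w) (a • z - b • w) : ℝ)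
        = a * a * (s*s) + b * b * (t*t) - 2 * a * b * inner ℝ z w := by
      simp only [inner_sub_left, inner_sub_right, real_inner_smul_left,
        real_inner_smul_right]
      rw [real_inner_self_eq_norm_sq, real_inner_self_eq_norm_sq, real_inner_comm w z,
        ← hs, ← ht]
      ring
    have e2 : (inner ℝ (a • z - b • w) (z - w) : ℝ)
        = a * (s*s) + b * (t*t) - (a + b) * inner ℝ z w := by
      simp only [inner_sub_left, inner_sub_right, real_inner_smul_left,
        real_inner_smul_right]
      rw [real_inner_self_eq_norm_sq, real_inner_self_eq_norm_sq, real_inner_comm w z,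
        ← hs, ← ht]
      ring
    rw [e1, e2]
    have h5 : (a*(γ-b)+b*(γ-a)) * inner ℝ z w ≤ (a*(γ-b)+b*(γ-a)) * (s*t) :=
      mul_le_mul_of_nonneg_left hcs hcoef
    nlinarith [hprod, h5]
  -- conclude
  rcases eq_or_lt_of_le (norm_nonneg (q z - q w)) with h0 | h0
  · rw [← h0]
    positivity
  · have hcs2 : (inner ℝ (q z - q w) (z - w) : ℝ) ≤ ‖q z - q w‖ * ‖z - w‖ :=
      real_inner_le_norm _ _
    have : ‖q z - q w‖ ^ 2 ≤ γ * (‖q z - q w‖ * ‖z - w‖) := by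
      calc ‖q z - q w‖ ^ 2 ≤ γ * inner ℝ (q z - q w) (z - w) := hkey
      _ ≤ γ * (‖q z - q w‖ * ‖z - w‖) := by
          exact mul_le_mul_of_nonneg_left hcs2 hγ.le
    exact le_of_mul_le_mul_right (by linarith) h0
end

section
/- If J : D → ℝᵐ, defined on an open set D ⊆ ℝⁿ, is locally Lipschitz continuous and directionally differentiable at x₀ ∈ D, then J is B-differentiable at x₀, i.e. ‖J(x₀+h) - J(x₀) - J'(x₀)(h)‖ = o(‖h‖) as h → 0, where J'(x₀)(h) denotes the one-sided directional derivative. -/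
set_option maxHeartbeats 1000000

open Filter Topology Asymptotics NNReal

theorem locally_lipschitz_dir_diff_implies_B_differentiable
    (n m : ℕ) (D : Set (EuclideanSpace ℝ (Fin n))) (hD : IsOpen D)
    (J : EuclideanSpace ℝ (Fin n) → EuclideanSpace ℝ (Fin m))
    (x₀ : EuclideanSpace ℝ (Fin n)) (hx₀ : x₀ ∈ D)
    (hlip : ∃ K : ℝ≥0, ∃ s ∈ 𝓝 x₀, LipschitzOnWith K J s)
    (J' : EuclideanSpace ℝ (Fin n) → EuclideanSpace ℝ (Fin m))
    (hdir : ∀ h, Tendsto (fun t : ℝ => t⁻¹ • (J (x₀ + t • h) - J x₀))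
      (𝓝[>] (0 : ℝ)) (𝓝 (J' h))) :
    (fun h => J (x₀ + h) - J x₀ - J' h) =o[𝓝 (0 : EuclideanSpace ℝ (Fin n))]
      fun h => ‖h‖ := by
  classical
  obtain ⟨K, s, hs, hK⟩ := hlip
  obtain ⟨r, hr, hball⟩ := Metric.mem_nhds_iff.mp hs
  -- positive homogeneity of J'
  have hom : ∀ c : ℝ, 0 < c → ∀ u, J' (c • u) = c • J' u := by
    intro c hc u
    have hmap : Tendsto (fun t : ℝ => t * c) (𝓝[>] 0) (𝓝[>] 0) := by
      rw [tendsto_nhdsWithin_iff]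
      refine ⟨?_, ?_⟩
      · have h1 : Tendsto (fun t : ℝ => t * c) (𝓝 0) (𝓝 (0 * c)) :=
          tendsto_id.mul_const c
        simpa using h1.mono_left nhdsWithin_le_nhds
      · filter_upwards [self_mem_nhdsWithin] with t ht
        exact mul_pos ht hc
    have h2 : Tendsto (fun t : ℝ => c • ((t * c)⁻¹ • (J (x₀ + (t * c) • u) - J x₀)))
        (𝓝[>] 0) (𝓝 (c • J' u)) := ((hdir u).comp hmap).const_smul c
    have heq : (fun t : ℝ => c • ((t * c)⁻¹ • (J (x₀ + (t * c) • u) - J x₀)))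
        =ᶠ[𝓝[>] (0 : ℝ)] fun t : ℝ => t⁻¹ • (J (x₀ + t • (c • u)) - J x₀) := by
      filter_upwards [self_mem_nhdsWithin] with t ht
      have ht' : t ≠ 0 := ne_of_gt ht
      have e1 : t • (c • u) = (t * c) • u := by rw [smul_smul]
      have e2 : c * (t * c)⁻¹ = t⁻¹ := by field_simp [ht', ne_of_gt hc]
      rw [smul_smul, e2, e1]
    exact tendsto_nhds_unique (hdir (c • u)) (h2.congr' heq)
  have hJ'0 : J' 0 = 0 := by
    have := hom 2 (by norm_num) 0
    rw [smul_zero] at this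
    have h2 : J' 0 - J' 0 = (2 : ℝ) • J' 0 - J' 0 := by rw [← this]
    simpa [two_smul] using h2.symm
  -- J' is K-Lipschitz
  have hJ'lip : ∀ u v, ‖J' u - J' v‖ ≤ (K : ℝ) * ‖u - v‖ := by
    intro u v
    have hTend : Tendsto (fun t : ℝ =>
        ‖t⁻¹ • (J (x₀ + t • u) - J x₀) - t⁻¹ • (J (x₀ + t • v) - J x₀)‖)
        (𝓝[>] 0) (𝓝 ‖J' u - J' v‖) := (((hdir u).sub (hdir v)).norm)
    refine le_of_tendsto hTend ?_
    set δ₀ := r / (‖u‖ + ‖v‖ + 1) with hδ₀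
    have hδ₀pos : 0 < δ₀ := div_pos hr (by positivity)
    filter_upwards [Ioo_mem_nhdsGT_of_mem (by exact ⟨le_refl _, hδ₀pos⟩ :
      (0:ℝ) ∈ Set.Ico 0 δ₀)] with t ht
    obtain ⟨ht0, htδ⟩ := ht
    have hmemu : x₀ + t • u ∈ s := by
      apply hball
      simp only [Metric.mem_ball, dist_eq_norm, add_sub_cancel_left, norm_smul,
        Real.norm_eq_abs, abs_of_pos ht0]
      calc t * ‖u‖ ≤ t * (‖u‖ + ‖v‖ + 1) := by nlinarith [norm_nonneg v]
        _ < δ₀ * (‖u‖ + ‖v‖ + 1) := by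
            apply mul_lt_mul_of_pos_right htδ; positivity
        _ ≤ r := by rw [hδ₀]; rw [div_mul_cancel₀]; positivity
    have hmemv : x₀ + t • v ∈ s := by
      apply hball
      simp only [Metric.mem_ball, dist_eq_norm, add_sub_cancel_left, norm_smul,
        Real.norm_eq_abs, abs_of_pos ht0]
      calc t * ‖v‖ ≤ t * (‖u‖ + ‖v‖ + 1) := by nlinarith [norm_nonneg u]
        _ < δ₀ * (‖u‖ + ‖v‖ + 1) := by
            apply mul_lt_mul_of_pos_right htδ; positivity
        _ ≤ r := by rw [hδ₀]; rw [div_mul_cancel₀]; positivity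
    have hdd : dist (J (x₀ + t • u)) (J (x₀ + t • v)) ≤ (K : ℝ) * dist (x₀ + t • u) (x₀ + t • v) :=
      hK.dist_le_mul _ hmemu _ hmemv
    have e1 : t⁻¹ • (J (x₀ + t • u) - J x₀) - t⁻¹ • (J (x₀ + t • v) - J x₀)
        = t⁻¹ • (J (x₀ + t • u) - J (x₀ + t • v)) := by
      rw [← smul_sub]; congr 1; abel
    rw [e1, norm_smul, Real.norm_eq_abs, abs_of_pos (inv_pos.mpr ht0)]
    have e2 : dist (x₀ + t • u) (x₀ + t • v) = t * ‖u - v‖ := by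
      rw [dist_eq_norm]
      have : x₀ + t • u - (x₀ + t • v) = t • (u - v) := by
        rw [smul_sub]; abel
      rw [this, norm_smul, Real.norm_eq_abs, abs_of_pos ht0]
    rw [dist_eq_norm, dist_eq_norm] at hdd
    rw [dist_eq_norm] at e2
    calc t⁻¹ * ‖J (x₀ + t • u) - J (x₀ + t • v)‖
        ≤ t⁻¹ * ((K : ℝ) * (t * ‖u - v‖)) := by
          apply mul_le_mul_of_nonneg_left _ (le_of_lt (inv_pos.mpr ht0))
          rw [← e2]; exact hdd
      _ = (K : ℝ) * ‖u - v‖ := by field_simp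
  -- main argument
  rw [isLittleO_iff]
  intro ε hε
  -- for each direction d, a δ from the directional derivative
  have hδexists : ∀ d : EuclideanSpace ℝ (Fin n), ∃ δ > 0, ∀ t : ℝ, 0 < t → t < δ →
      ‖J (x₀ + t • d) - J x₀ - t • J' d‖ ≤ ε / 3 * t := by
    intro d
    have hev : ∀ᶠ t in 𝓝[>] (0:ℝ), ‖t⁻¹ • (J (x₀ + t • d) - J x₀) - J' d‖ ≤ ε / 3 := by
      have := (hdir d).eventually (Metric.closedBall_mem_nhds (J' d) (by positivity : (0:ℝ) < ε/3))
      filter_upwards [this] with t ht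
      simpa [dist_eq_norm] using ht
    rw [eventually_nhdsWithin_iff] at hev
    obtain ⟨u, hu0, hu⟩ := Metric.eventually_nhds_iff.mp hev
    refine ⟨u, hu0, fun t ht0 htu => ?_⟩
    have h1 : ‖t⁻¹ • (J (x₀ + t • d) - J x₀) - J' d‖ ≤ ε / 3 := by
      apply hu _ ht0
      simpa [Real.dist_eq, abs_of_pos ht0] using htu
    have e : J (x₀ + t • d) - J x₀ - t • J' d = t • (t⁻¹ • (J (x₀ + t • d) - J x₀) - J' d) := by
      rw [smul_sub, smul_smul, mul_inv_cancel₀ (ne_of_gt ht0), one_smul]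
    rw [e, norm_smul, Real.norm_eq_abs, abs_of_pos ht0, mul_comm]
    exact mul_le_mul_of_nonneg_right h1 (le_of_lt ht0)
  choose δf hδfpos hδf using hδexists
  set ρ : ℝ := min 1 (ε / (3 * ((K : ℝ) + 1))) with hρ
  have hρpos : 0 < ρ := lt_min one_pos (by positivity)
  have hρ1 : ρ ≤ 1 := min_le_left _ _
  have hKρ : (K : ℝ) * ρ ≤ ε / 3 := by
    have h1 : ρ ≤ ε / (3 * ((K : ℝ) + 1)) := min_le_right _ _
    have hK0 : (0:ℝ) ≤ (K : ℝ) := K.coe_nonneg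
    calc (K : ℝ) * ρ ≤ ((K : ℝ) + 1) * (ε / (3 * ((K : ℝ) + 1))) := by
          apply mul_le_mul (by linarith) h1 (le_of_lt hρpos) (by linarith)
      _ = ε / 3 := by field_simp
  -- compactness of the sphere
  have hcomp : IsCompact (Metric.sphere (0 : EuclideanSpace ℝ (Fin n)) 1) :=
    isCompact_sphere 0 1
  obtain ⟨F, hF⟩ := hcomp.elim_finite_subcover (fun d => Metric.ball d ρ)
    (fun d => Metric.isOpen_ball)
    (fun x hx => Set.mem_iUnion.mpr ⟨x, Metric.mem_ball_self hρpos⟩)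
  set F' : Finset (EuclideanSpace ℝ (Fin n)) := insert 0 F with hF'
  have hF'ne : F'.Nonempty := ⟨0, Finset.mem_insert_self 0 F⟩
  set δ : ℝ := min (r / 2) (F'.inf' hF'ne δf) with hδ
  have hδpos : 0 < δ := by
    apply lt_min (by positivity)
    rw [Finset.lt_inf'_iff]
    exact fun i _ => hδfpos i
  filter_upwards [Metric.ball_mem_nhds (0 : EuclideanSpace ℝ (Fin n)) hδpos] with h hh
  rcases eq_or_ne h 0 with rfl | hne
  · simp [hJ'0]
  · have ht0 : 0 < ‖h‖ := norm_pos_iff.mpr hne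
    set t : ℝ := ‖h‖ with htdef
    set d : EuclideanSpace ℝ (Fin n) := t⁻¹ • h with hd
    have hdnorm : ‖d‖ = 1 := by
      rw [hd, norm_smul, Real.norm_eq_abs, abs_of_pos (inv_pos.mpr ht0)]
      field_simp
      exact htdef.symm
    have hdS : d ∈ Metric.sphere (0 : EuclideanSpace ℝ (Fin n)) 1 := by
      simpa [Metric.mem_sphere, dist_eq_norm] using hdnorm
    obtain ⟨i, hiF, hdi⟩ := Set.mem_iUnion₂.mp (hF hdS)
    have hdist : ‖d - i‖ < ρ := by
      simpa [dist_eq_norm] using hdi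
    have hhd : h = t • d := by
      rw [hd, smul_smul, mul_inv_cancel₀ (ne_of_gt ht0), one_smul]
    have htδ : t < δ := by
      have := hh
      rw [Metric.mem_ball, dist_eq_norm, sub_zero] at this
      exact this
    have htr : t < r / 2 := lt_of_lt_of_le htδ (min_le_left _ _)
    have htδi : t < δf i := by
      have h1 : δ ≤ δf i := le_trans (min_le_right _ _)
        (Finset.inf'_le δf (Finset.mem_insert_of_mem hiF))
      linarith
    have hinorm : ‖i‖ ≤ 1 + ρ := by
      have : ‖i‖ ≤ ‖d‖ + ‖i - d‖ := by
        have := norm_add_le d (i - d)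
        simpa using this
      rw [hdnorm] at this
      have h2 : ‖i - d‖ = ‖d - i‖ := norm_sub_rev i d
      linarith [hdist, h2 ▸ this]
    -- membership in s
    have hmemd : x₀ + t • d ∈ s := by
      apply hball
      rw [Metric.mem_ball, dist_eq_norm, add_sub_cancel_left, norm_smul,
        Real.norm_eq_abs, abs_of_pos ht0, hdnorm, mul_one]
      linarith
    have hmemi : x₀ + t • i ∈ s := by
      apply hball
      rw [Metric.mem_ball, dist_eq_norm, add_sub_cancel_left, norm_smul,
        Real.norm_eq_abs, abs_of_pos ht0]
      calc t * ‖i‖ ≤ t * 2 := by nlinarith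
        _ < r := by linarith
    -- the three pieces
    have hA : ‖J (x₀ + t • d) - J (x₀ + t • i)‖ ≤ ε / 3 * t := by
      have hdd := hK.dist_le_mul _ hmemd _ hmemi
      rw [dist_eq_norm, dist_eq_norm] at hdd
      have e : x₀ + t • d - (x₀ + t • i) = t • (d - i) := by
        rw [smul_sub]; abel
      rw [e, norm_smul, Real.norm_eq_abs, abs_of_pos ht0] at hdd
      calc ‖J (x₀ + t • d) - J (x₀ + t • i)‖ ≤ (K : ℝ) * (t * ‖d - i‖) := hdd
        _ = ((K : ℝ) * ‖d - i‖) * t := by ring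
        _ ≤ (ε / 3) * t := by
            apply mul_le_mul_of_nonneg_right _ (le_of_lt ht0)
            calc (K : ℝ) * ‖d - i‖ ≤ (K : ℝ) * ρ := by
                  apply mul_le_mul_of_nonneg_left (le_of_lt hdist) K.coe_nonneg
              _ ≤ ε / 3 := hKρ
    have hB : ‖J (x₀ + t • i) - J x₀ - t • J' i‖ ≤ ε / 3 * t := hδf i t ht0 htδi
    have hC : ‖t • J' i - J' (t • d)‖ ≤ ε / 3 * t := by
      rw [hom t ht0 d, ← smul_sub, norm_smul, Real.norm_eq_abs, abs_of_pos ht0]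
      calc t * ‖J' i - J' d‖ ≤ t * ((K : ℝ) * ‖i - d‖) := by
            apply mul_le_mul_of_nonneg_left (hJ'lip i d) (le_of_lt ht0)
        _ ≤ t * (ε / 3) := by
            apply mul_le_mul_of_nonneg_left _ (le_of_lt ht0)
            calc (K : ℝ) * ‖i - d‖ = (K : ℝ) * ‖d - i‖ := by rw [norm_sub_rev]
              _ ≤ (K : ℝ) * ρ := by
                  apply mul_le_mul_of_nonneg_left (le_of_lt hdist) K.coe_nonneg
              _ ≤ ε / 3 := hKρ
        _ = ε / 3 * t := by ring
    have hsum : J (x₀ + h) - J x₀ - J' h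
        = (J (x₀ + t • d) - J (x₀ + t • i)) + (J (x₀ + t • i) - J x₀ - t • J' i)
          + (t • J' i - J' (t • d)) := by
      rw [hhd]; abel
    calc ‖J (x₀ + h) - J x₀ - J' h‖
        ≤ ‖J (x₀ + t • d) - J (x₀ + t • i)‖ + ‖J (x₀ + t • i) - J x₀ - t • J' i‖
          + ‖t • J' i - J' (t • d)‖ := by
          rw [hsum]; exact norm_add₃_le
      _ ≤ ε / 3 * t + ε / 3 * t + ε / 3 * t := by linarith
      _ = ε * t := by ring
      _ ≤ ε * ‖‖h‖‖ := by
          rw [Real.norm_eq_abs, abs_of_pos ht0]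
end

section
/- (Mean value theorem for B-differentiable functions.) Let D ⊆ ℝⁿ be open and convex and J : D → ℝᵐ be B-differentiable on D with locally Lipschitz J. Then for any x₀, x₁ ∈ D the function t ↦ J'(x₀ + t(x₁-x₀))(x₁-x₀) is Lebesgue integrable on [0,1] and J(x₁) = J(x₀) + ∫₀¹ J'(x₀ + t(x₁-x₀))(x₁-x₀) dt. -/
open Filter Topology Asymptotics NNReal

open MeasureTheory Set

lemma mvt_aux {F : Type*} [NormedAddCommGroup F] [NormedSpace ℝ F] [CompleteSpace F]
    (g φ : ℝ → F)
    (hcont : ContinuousOn g (Icc 0 1))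
    (hlim : ∀ t ∈ Icc (0:ℝ) 1, Tendsto (fun u : ℝ => u⁻¹ • (g (t + u) - g t))
      (𝓝[>] (0:ℝ)) (𝓝 (φ t)))
    (C : ℝ) (hC : ∀ t ∈ Icc (0:ℝ) 1, ‖φ t‖ ≤ C) :
    IntervalIntegrable φ volume 0 1 ∧ ∫ t in (0:ℝ)..1, φ t = g 1 - g 0 := by
  -- measurability via pointwise limits
  set f : ℕ → ℝ → F := fun k t => ((1 - t) / (k + 1))⁻¹ • (g (t + (1 - t) / (k + 1)) - g t)
    with hf
  have hmaps : ∀ k : ℕ, ∀ t ∈ Ioo (0:ℝ) 1, t + (1 - t) / (k + 1) ∈ Icc (0:ℝ) 1 := by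
    intro k t ht
    have hk : (0:ℝ) < k + 1 := by positivity
    constructor
    · have : 0 ≤ (1 - t) / (k + 1) := by
        apply div_nonneg (by linarith [ht.2]) hk.le
      linarith [ht.1]
    · have : (1 - t) / (k + 1) ≤ 1 - t := by
        apply div_le_self (by linarith [ht.2]) (by linarith)
      linarith
  have hmeasf : ∀ k : ℕ, AEStronglyMeasurable (f k) (volume.restrict (Ioo 0 1)) := by
    intro k
    apply ContinuousOn.aestronglyMeasurable _ measurableSet_Ioo
    have hinner : Continuous (fun t : ℝ => t + (1 - t) / (k + 1)) := by continuity
    have h1 : ContinuousOn (fun t : ℝ => ((1 - t) / (k + 1))⁻¹) (Ioo 0 1) := by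
      apply ContinuousOn.inv₀ (by fun_prop)
      intro t ht
      have : (0:ℝ) < (1 - t) / (k + 1) := by
        apply div_pos (by linarith [ht.2]) (by positivity)
      exact ne_of_gt this
    exact h1.smul ((hcont.comp hinner.continuousOn (hmaps k)).sub
      (hcont.mono Ioo_subset_Icc_self))
  have hlim2 : ∀ t ∈ Ioo (0:ℝ) 1, Tendsto (fun k : ℕ => f k t) atTop (𝓝 (φ t)) := by
    intro t ht
    have hu : Tendsto (fun k : ℕ => (1 - t) / (k + 1)) atTop (𝓝[>] (0:ℝ)) := by
      rw [tendsto_nhdsWithin_iff]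
      constructor
      · have := tendsto_one_div_add_atTop_nhds_zero_nat (𝕜 := ℝ)
        have h2 : Tendsto (fun k : ℕ => (1 - t) * (1 / (k + 1))) atTop (𝓝 ((1 - t) * 0)) :=
          this.const_mul (1 - t)
        simpa [mul_one_div, div_eq_mul_inv] using h2
      · filter_upwards with k
        exact Set.mem_Ioi.2 (div_pos (show (0:ℝ) < 1 - t by linarith [ht.2])
          (by positivity))
    exact (hlim t (Ioo_subset_Icc_self ht)).comp hu
  have hφmeas : AEStronglyMeasurable φ (volume.restrict (Ioo 0 1)) := by
    apply aestronglyMeasurable_of_tendsto_ae atTop hmeasf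
    rw [ae_restrict_iff' measurableSet_Ioo]
    exact Eventually.of_forall hlim2
  have hint : IntervalIntegrable φ volume 0 1 := by
    rw [intervalIntegrable_iff_integrableOn_Ioo_of_le (by norm_num : (0:ℝ) ≤ 1)]
    apply Integrable.mono' (g := fun _ => C)
    · exact integrableOn_const (by simp [Real.volume_Ioo])
    · exact hφmeas
    · rw [ae_restrict_iff' measurableSet_Ioo]
      filter_upwards with t ht
      exact hC t (Ioo_subset_Icc_self ht)
  have hderiv : ∀ t ∈ Ioo (0:ℝ) 1, HasDerivWithinAt g (φ t) (Ioi t) t := by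
    intro t ht
    rw [hasDerivWithinAt_iff_tendsto_slope]
    have hset : Ioi t \ {t} = Ioi t := Set.diff_singleton_eq_self (fun h => lt_irrefl t h)
    rw [hset]
    have hmap : Tendsto (fun s : ℝ => s - t) (𝓝[>] t) (𝓝[>] (0:ℝ)) := by
      rw [tendsto_nhdsWithin_iff]
      constructor
      · have : Tendsto (fun s : ℝ => s - t) (𝓝 t) (𝓝 (t - t)) :=
          (continuous_id.sub continuous_const).tendsto t
        rw [sub_self] at this
        exact this.mono_left nhdsWithin_le_nhds
      · filter_upwards [self_mem_nhdsWithin] with s hs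
        exact sub_pos.2 (Set.mem_Ioi.1 hs)
    have := (hlim t (Ioo_subset_Icc_self ht)).comp hmap
    apply this.congr
    intro s
    simp only [Function.comp_apply, slope_def_module]
    congr 2
    ring
  refine ⟨hint, ?_⟩
  exact intervalIntegral.integral_eq_sub_of_hasDeriv_right_of_le (by norm_num) hcont hderiv hint

theorem mean_value_B_differentiable
    (n m : ℕ) (D : Set (EuclideanSpace ℝ (Fin n))) (hD : IsOpen D)
    (hDconv : Convex ℝ D)
    (J : EuclideanSpace ℝ (Fin n) → EuclideanSpace ℝ (Fin m))
    (J' : EuclideanSpace ℝ (Fin n) → EuclideanSpace ℝ (Fin n) →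
      EuclideanSpace ℝ (Fin m))
    (hlip : ∀ x ∈ D, ∃ K : ℝ≥0, ∃ s ∈ 𝓝 x, LipschitzOnWith K J s)
    (hdir : ∀ x ∈ D, ∀ h, Tendsto (fun t : ℝ => t⁻¹ • (J (x + t • h) - J x))
      (𝓝[>] (0 : ℝ)) (𝓝 (J' x h)))
    (ho : ∀ x ∈ D, (fun h => J (x + h) - J x - J' x h)
      =o[𝓝 (0 : EuclideanSpace ℝ (Fin n))] fun h => ‖h‖)
    (x₀ x₁ : EuclideanSpace ℝ (Fin n)) (hx₀ : x₀ ∈ D) (hx₁ : x₁ ∈ D) :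
    IntervalIntegrable (fun t : ℝ => J' (x₀ + t • (x₁ - x₀)) (x₁ - x₀))
      MeasureTheory.volume 0 1 ∧
    J x₁ = J x₀ + ∫ t in (0:ℝ)..1, J' (x₀ + t • (x₁ - x₀)) (x₁ - x₀) := by
  set v : EuclideanSpace ℝ (Fin n) := x₁ - x₀ with hv
  set g : ℝ → EuclideanSpace ℝ (Fin m) := fun t => J (x₀ + t • v) with hg
  set φ : ℝ → EuclideanSpace ℝ (Fin m) := fun t => J' (x₀ + t • v) v with hφ
  -- membership of the segment in D
  have hmem : ∀ t ∈ Icc (0:ℝ) 1, x₀ + t • v ∈ D := by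
    intro t ht
    have h := hDconv hx₀ hx₁ (by linarith [ht.2] : (0:ℝ) ≤ 1 - t) ht.1 (by ring)
    have heq : x₀ + t • v = (1 - t) • x₀ + t • x₁ := by
      rw [hv]; module
    rw [heq]; exact h
  -- the directional-derivative limit in terms of g
  have hlim : ∀ t ∈ Icc (0:ℝ) 1, Tendsto (fun u : ℝ => u⁻¹ • (g (t + u) - g t))
      (𝓝[>] (0:ℝ)) (𝓝 (φ t)) := by
    intro t ht
    have h := hdir _ (hmem t ht) v
    apply h.congr
    intro u
    have : x₀ + t • v + u • v = x₀ + (t + u) • v := by module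
    rw [hg]
    simp only [this]
  -- continuity of g on [0,1]
  have hcont : ContinuousOn g (Icc 0 1) := by
    intro t ht
    apply ContinuousAt.continuousWithinAt
    obtain ⟨K, s, hs, hK⟩ := hlip _ (hmem t ht)
    have hJc : ContinuousAt J (x₀ + t • v) :=
      (hK.continuousOn.continuousWithinAt (mem_of_mem_nhds hs)).continuousAt hs
    have hin : ContinuousAt (fun t : ℝ => x₀ + t • v) t := by fun_prop
    exact ContinuousAt.comp (g := J) (f := fun t : ℝ => x₀ + t • v) hJc hin
  -- uniform bound on ‖φ‖ over [0,1] via compactness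
  have hbdd : ∃ C : ℝ, ∀ t ∈ Icc (0:ℝ) 1, ‖φ t‖ ≤ C := by
    have key : ∀ t ∈ Icc (0:ℝ) 1, ∃ U ∈ 𝓝[Icc (0:ℝ) 1] t,
        ∃ C : ℝ, ∀ s ∈ U, ‖φ s‖ ≤ C := by
      intro t ht
      obtain ⟨K, st, hst, hK⟩ := hlip _ (hmem t ht)
      obtain ⟨r, hr, hball⟩ := Metric.mem_nhds_iff.1 hst
      set δ : ℝ := r / (2 * (‖v‖ + 1)) with hδ
      have hδpos : 0 < δ := by
        apply div_pos hr
        positivity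
      have hδv : δ * ‖v‖ < r / 2 := by
        rw [hδ, div_mul_eq_mul_div, div_lt_div_iff₀ (by positivity) (by norm_num)]
        nlinarith [norm_nonneg v]
      refine ⟨Metric.ball t δ ∩ Icc 0 1, inter_mem
        (nhdsWithin_le_nhds (Metric.ball_mem_nhds t hδpos)) self_mem_nhdsWithin,
        (K : ℝ) * ‖v‖, ?_⟩
      rintro s ⟨hsball, hsIcc⟩
      have hdist : ‖(x₀ + s • v) - (x₀ + t • v)‖ < r / 2 := by
        have h1 : (x₀ + s • v) - (x₀ + t • v) = (s - t) • v := by module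
        rw [h1, norm_smul, Real.norm_eq_abs]
        calc |s - t| * ‖v‖ ≤ δ * ‖v‖ := by
              apply mul_le_mul_of_nonneg_right _ (norm_nonneg v)
              exact le_of_lt (by simpa [Real.dist_eq] using hsball)
          _ < r / 2 := hδv
      have h1 : Tendsto (fun u : ℝ => ‖u⁻¹ • (g (s + u) - g s)‖) (𝓝[>] (0:ℝ))
          (𝓝 ‖φ s‖) := (hlim s hsIcc).norm
      apply le_of_tendsto h1
      filter_upwards [Ioo_mem_nhdsGT_of_mem (Set.left_mem_Ico.2 hδpos)] with u hu
      have hu0 : 0 < u := hu.1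
      have hys : x₀ + s • v ∈ st := by
        apply hball
        simp only [Metric.mem_ball, dist_eq_norm]
        linarith [hdist]
      have hyu : x₀ + (s + u) • v ∈ st := by
        apply hball
        simp only [Metric.mem_ball, dist_eq_norm]
        have h2 : (x₀ + (s + u) • v) - (x₀ + t • v)
            = ((x₀ + s • v) - (x₀ + t • v)) + u • v := by module
        calc ‖(x₀ + (s + u) • v) - (x₀ + t • v)‖
            ≤ ‖(x₀ + s • v) - (x₀ + t • v)‖ + ‖u • v‖ := by
              rw [h2]; exact norm_add_le _ _
          _ < r / 2 + r / 2 := by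
              apply add_lt_add_of_lt_of_le hdist
              rw [norm_smul, Real.norm_eq_abs, abs_of_pos hu0]
              calc u * ‖v‖ ≤ δ * ‖v‖ :=
                    mul_le_mul_of_nonneg_right hu.2.le (norm_nonneg v)
                _ ≤ r / 2 := hδv.le
          _ = r := by ring
      have hlipb : ‖g (s + u) - g s‖ ≤ (K : ℝ) * (u * ‖v‖) := by
        have := hK.dist_le_mul _ hyu _ hys
        rw [dist_eq_norm] at this
        calc ‖g (s + u) - g s‖ = ‖J (x₀ + (s + u) • v) - J (x₀ + s • v)‖ := rfl
          _ ≤ (K : ℝ) * dist (x₀ + (s + u) • v) (x₀ + s • v) := hK.dist_le_mul _ hyu _ hys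
          _ = (K : ℝ) * (u * ‖v‖) := by
              rw [dist_eq_norm]
              congr 1
              have h3 : (x₀ + (s + u) • v) - (x₀ + s • v) = u • v := by module
              rw [h3, norm_smul, Real.norm_eq_abs, abs_of_pos hu0]
      rw [norm_smul, Real.norm_eq_abs, abs_of_pos (inv_pos.2 hu0)]
      calc u⁻¹ * ‖g (s + u) - g s‖ ≤ u⁻¹ * ((K : ℝ) * (u * ‖v‖)) := by
            apply mul_le_mul_of_nonneg_left hlipb (inv_pos.2 hu0).le
        _ = (K : ℝ) * ‖v‖ := by field_simp
    have := isCompact_Icc.induction_on (p := fun u : Set ℝ => ∃ C : ℝ, ∀ s ∈ u, ‖φ s‖ ≤ C)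
      ⟨0, by simp⟩
      (fun s t hsub ⟨C, hC⟩ => ⟨C, fun x hx => hC x (hsub hx)⟩)
      (fun s t ⟨C₁, hC₁⟩ ⟨C₂, hC₂⟩ => ⟨max C₁ C₂, fun x hx => hx.elim
        (fun h => (hC₁ x h).trans (le_max_left _ _))
        (fun h => (hC₂ x h).trans (le_max_right _ _))⟩)
      (fun t ht => by
        obtain ⟨U, hU, C, hCU⟩ := key t ht
        exact ⟨U, hU, C, hCU⟩)
    exact this
  obtain ⟨C, hC⟩ := hbdd
  obtain ⟨hint, heq⟩ := mvt_aux g φ hcont hlim C hC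
  refine ⟨hint, ?_⟩
  have e1 : x₀ + (1:ℝ) • v = x₁ := by rw [hv]; module
  have e0 : x₀ + (0:ℝ) • v = x₀ := by rw [hv]; module
  have hg1 : g 1 = J x₁ := by rw [hg]; simp only [e1]
  have hg0 : g 0 = J x₀ := by rw [hg]; simp only [e0]
  rw [heq, hg1, hg0]
  abel
end

section
/- Let H : ℝᴺ → ℝᴺ and suppose for vectors u, ũ with w = ũ - u ≠ 0 that H(ũ) - H(u) = ∫₀¹ H'(u + tw)(w) dt, that there is a constant c > 0 with ⟨H°(ũ)(w), w⟩ ≥ c‖w‖², and that ‖∫₀¹ (H'(u+tw)(w) - H°(ũ)(w)) dt‖ ≤ ε‖w‖ with ε < c/2. Then ⟨H(u) - H(ũ), w⟩ ≤ -(c/2)‖w‖² < 0. -/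
open RealInnerProductSpace

theorem descent_core_inequality (N : ℕ)
    (H : EuclideanSpace ℝ (Fin N) → EuclideanSpace ℝ (Fin N))
    (H' : EuclideanSpace ℝ (Fin N) → EuclideanSpace ℝ (Fin N) →
      EuclideanSpace ℝ (Fin N))
    (S : EuclideanSpace ℝ (Fin N) →L[ℝ] EuclideanSpace ℝ (Fin N))
    (u utilde w : EuclideanSpace ℝ (Fin N))
    (hw : w = utilde - u) (hw0 : w ≠ 0)
    (hint : IntervalIntegrable (fun t : ℝ => H' (u + t • w) w)
      MeasureTheory.volume 0 1)
    (hmvt : H utilde - H u = ∫ t in (0:ℝ)..1, H' (u + t • w) w)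
    (c : ℝ) (hc : 0 < c)
    (hpd : c * ‖w‖ ^ 2 ≤ ⟪S w, w⟫)
    (ε : ℝ) (hε : ε < c / 2)
    (herr : ‖∫ t in (0:ℝ)..1, (H' (u + t • w) w - S w)‖ ≤ ε * ‖w‖) :
    ⟪H u - H utilde, w⟫ ≤ -(c / 2) * ‖w‖ ^ 2 ∧ -(c / 2) * ‖w‖ ^ 2 < 0 := by
  have hwpos : (0:ℝ) < ‖w‖ := norm_pos_iff.mpr hw0
  have hw2 : (0:ℝ) < ‖w‖ ^ 2 := by positivity
  set I : EuclideanSpace ℝ (Fin N) := ∫ t in (0:ℝ)..1, H' (u + t • w) w with hI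
  set E : EuclideanSpace ℝ (Fin N) := ∫ t in (0:ℝ)..1, (H' (u + t • w) w - S w)
    with hE
  have hEeq : E = I - S w := by
    rw [hE, intervalIntegral.integral_sub hint intervalIntegrable_const,
      intervalIntegral.integral_const]
    simp
    exact hI.symm
  have hIeq : I = S w + E := by rw [hEeq]; abel
  have hEw : |⟪E, w⟫| ≤ ε * ‖w‖ ^ 2 := by
    calc |⟪E, w⟫| ≤ ‖E‖ * ‖w‖ := abs_real_inner_le_norm E w
      _ ≤ (ε * ‖w‖) * ‖w‖ := by
          exact mul_le_mul_of_nonneg_right herr (le_of_lt hwpos)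
      _ = ε * ‖w‖ ^ 2 := by ring
  have hIw : c / 2 * ‖w‖ ^ 2 ≤ ⟪I, w⟫ := by
    have h1 : ⟪I, w⟫ = ⟪S w, w⟫ + ⟪E, w⟫ := by rw [hIeq, inner_add_left]
    have h2 : -(ε * ‖w‖ ^ 2) ≤ ⟪E, w⟫ := neg_le_of_abs_le hEw
    have h3 : ε * ‖w‖ ^ 2 ≤ c / 2 * ‖w‖ ^ 2 :=
      mul_le_mul_of_nonneg_right (le_of_lt hε) (le_of_lt hw2)
    nlinarith
  have hneg : H u - H utilde = -I := by
    rw [← hmvt]; abel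
  constructor
  · rw [hneg, inner_neg_left]
    linarith
  · nlinarith
end
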